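/- arXiv:2509.01359 — 5 statements merged into one kernel-verified Lean document; each statement's English description precedes it below -/
import Mathlib

section
/- Let H and H_I be Hermitian n×n complex matrices. Suppose H has an orthonormal eigenbasis Ψ_0, Ψ_1, …, Ψ_{n-1} with H Ψ_j = E_j Ψ_j, where E_0 is the smallest eigenvalue and is simple (E_j > E_0 for all j ≠ 0). Let G⁺ be any n×n matrix satisfying the four Moore–Penrose conditions with respect to A := H − E_0·I, namely A G⁺ A = A, G⁺ A G⁺ = G⁺, (A G⁺)* = A G⁺, and (G⁺ A)* = G⁺ A. Then ∑_{j ≠ 0} |⟨Ψ_j, H_I Ψ_0⟩|² / (E_j − E_0)² = ‖G⁺ H_I Ψ_0‖₂², where ‖·‖₂ is the Euclidean norm on ℂⁿ. -/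
open Matrix
open scoped ComplexInnerProductSpace

/-- The identification of `Fin n → ℂ` with the Euclidean space `ℂⁿ`,
used to speak about the Euclidean (`ℓ²`) norm and inner product of vectors. -/
noncomputable def toE {n : ℕ} (v : Fin n → ℂ) : EuclideanSpace ℂ (Fin n) :=
  (WithLp.equiv 2 (Fin n → ℂ)).symm v

lemma toE_zero {n : ℕ} : toE (0 : Fin n → ℂ) = 0 := rfl

lemma toE_sub {n : ℕ} (x y : Fin n → ℂ) : toE (x - y) = toE x - toE y := rfl

lemma toE_smul {n : ℕ} (c : ℂ) (x : Fin n → ℂ) : toE (c • x) = c • toE x := rfl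

lemma inner_toE {n : ℕ} (x y : Fin n → ℂ) :
    ⟪toE x, toE y⟫ = dotProduct (star x) y := by
  simp [toE, PiLp.inner_apply, dotProduct, RCLike.inner_apply, mul_comm]

lemma inner_toE_mulVec {n : ℕ} (M : Matrix (Fin n) (Fin n) ℂ) (x y : Fin n → ℂ) :
    ⟪toE x, toE (M.mulVec y)⟫ = ⟪toE (Mᴴ.mulVec x), toE y⟫ := by
  rw [inner_toE, inner_toE, Matrix.star_mulVec, Matrix.conjTranspose_conjTranspose,
    Matrix.dotProduct_mulVec]

/-- For Hermitian `H, H_I` with orthonormal eigenbasis `Ψ` of `H`,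
eigenvalues `E` with `E 0` the smallest and simple, and any matrix `Gp` satisfying the four
Moore–Penrose conditions with respect to `A = H - E 0 • 1`, the perturbative (Lehmann) sum
for the fidelity susceptibility equals `‖Gp (H_I Ψ₀)‖₂²`. -/
theorem stmt_0 (n : ℕ) [NeZero n]
    (H HI : Matrix (Fin n) (Fin n) ℂ)
    (hH : H.IsHermitian) (hHI : HI.IsHermitian)
    (Ψ : Fin n → (Fin n → ℂ)) (E : Fin n → ℝ)
    (horth : Orthonormal ℂ (fun j => toE (Ψ j)))
    (heig : ∀ j, H.mulVec (Ψ j) = (E j : ℂ) • Ψ j)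
    (hground : ∀ j, j ≠ 0 → E 0 < E j)
    (A Gp : Matrix (Fin n) (Fin n) ℂ)
    (hA : A = H - (E 0 : ℂ) • 1)
    (h1 : A * Gp * A = A) (h2 : Gp * A * Gp = Gp)
    (h3 : (A * Gp)ᴴ = A * Gp) (h4 : (Gp * A)ᴴ = Gp * A) :
    ∑ j ∈ Finset.univ.erase 0,
        ‖⟪toE (Ψ j), toE (HI.mulVec (Ψ 0))⟫‖ ^ 2 / (E j - E 0) ^ 2
      = ‖toE (Gp.mulVec (HI.mulVec (Ψ 0)))‖ ^ 2 := by
  set w : Fin n → ℂ := HI.mulVec (Ψ 0) with hw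
  set lam : Fin n → ℂ := fun j => ((E j - E 0 : ℝ) : ℂ) with hlam
  have hAH : Aᴴ = A := by
    rw [hA]
    simp [Matrix.conjTranspose_sub, hH.eq, Matrix.conjTranspose_smul, Complex.conj_ofReal]
  have hAeig : ∀ j, A.mulVec (Ψ j) = lam j • Ψ j := by
    intro j
    rw [hA, Matrix.sub_mulVec, heig, Matrix.smul_mulVec, Matrix.one_mulVec, hlam]
    push_cast
    rw [sub_smul]
  have hA0 : A.mulVec (Ψ 0) = 0 := by
    rw [hAeig]; simp [hlam]
  have hlamne : ∀ j, j ≠ 0 → lam j ≠ 0 := by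
    intro j hj
    have := hground j hj
    simp only [hlam, ne_eq, Complex.ofReal_eq_zero, sub_eq_zero]
    exact fun h => absurd h.symm (ne_of_lt this)
  -- `Gp` kills the ground state
  have e1 : Gp = Gp * Gpᴴ * A := by
    conv_lhs => rw [← h2]
    rw [mul_assoc, ← h3, Matrix.conjTranspose_mul, hAH, ← mul_assoc]
  have e2 : Gpᴴ = Gpᴴ * Gp * A := by
    conv_lhs => rw [← h2]
    rw [Matrix.conjTranspose_mul, h4, ← mul_assoc]
  have hGp0 : Gp.mulVec (Ψ 0) = 0 := by
    conv_lhs => rw [e1]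
    rw [← Matrix.mulVec_mulVec, hA0, Matrix.mulVec_zero]
  have hGpH0 : Gpᴴ.mulVec (Ψ 0) = 0 := by
    conv_lhs => rw [e2]
    rw [← Matrix.mulVec_mulVec, hA0, Matrix.mulVec_zero]
  -- orthonormal basis
  have hcard : Fintype.card (Fin n) = Module.finrank ℂ (EuclideanSpace ℂ (Fin n)) := by
    simp
  let b0 : Module.Basis (Fin n) ℂ (EuclideanSpace ℂ (Fin n)) :=
    basisOfOrthonormalOfCardEqFinrank horth hcard
  have hb0 : ⇑b0 = fun j => toE (Ψ j) := coe_basisOfOrthonormalOfCardEqFinrank horth hcard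
  let b : OrthonormalBasis (Fin n) ℂ (EuclideanSpace ℂ (Fin n)) :=
    b0.toOrthonormalBasis (by rwa [hb0])
  have hb : ∀ j, b j = toE (Ψ j) := by
    intro j
    have := Module.Basis.coe_toOrthonormalBasis b0 (by rwa [hb0])
    rw [show ⇑b = ⇑b0 from this, hb0]
  -- extensionality against the basis
  have hext : ∀ u : Fin n → ℂ, (∀ k, ⟪toE (Ψ k), toE u⟫ = 0) → u = 0 := by
    intro u hu
    have hrep : b.repr (toE u) = 0 := by
      ext k
      rw [b.repr_apply_apply, hb k]
      simpa using hu k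
    have : toE u = 0 := by
      have := congrArg b.repr.symm hrep
      simpa using this
    have := congrArg (WithLp.equiv 2 (Fin n → ℂ)) this
    simpa [toE] using this
  -- `Gp A` fixes excited states
  have hP : ∀ j, j ≠ 0 → (Gp * A).mulVec (Ψ j) = Ψ j := by
    intro j hj
    have hAu : A.mulVec ((Gp * A).mulVec (Ψ j) - Ψ j) = 0 := by
      rw [Matrix.mulVec_sub, Matrix.mulVec_mulVec, ← mul_assoc, h1, sub_self]
    have hcoef : ∀ k, ⟪toE (Ψ k), toE ((Gp * A).mulVec (Ψ j) - Ψ j)⟫ = 0 := by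
      intro k
      by_cases hk : k = 0
      · subst hk
        rw [toE_sub, inner_sub_right]
        have h01 : ⟪toE (Ψ 0), toE ((Gp * A).mulVec (Ψ j))⟫ = 0 := by
          rw [inner_toE_mulVec, h4, ← Matrix.mulVec_mulVec, hA0, Matrix.mulVec_zero, toE_zero,
            inner_zero_left]
        have h02 : ⟪toE (Ψ 0), toE (Ψ j)⟫ = 0 := horth.2 (Ne.symm hj)
        rw [h01, h02, sub_zero]
      · have h0 : ⟪toE (Ψ k), toE (A.mulVec ((Gp * A).mulVec (Ψ j) - Ψ j))⟫ = 0 := by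
          rw [hAu, toE_zero, inner_zero_right]
        rw [inner_toE_mulVec, hAH, hAeig, toE_smul, inner_smul_left] at h0
        have hconj : (starRingEnd ℂ) (lam k) ≠ 0 := by
          simp only [hlam, Complex.conj_ofReal]
          exact hlamne k hk
        exact (mul_eq_zero.mp h0).resolve_left hconj
    have := hext _ hcoef
    rw [sub_eq_zero] at this
    exact this
  have hGpj : ∀ j, j ≠ 0 → Gp.mulVec (Ψ j) = (lam j)⁻¹ • Ψ j := by
    intro j hj
    have : Gp.mulVec (lam j • Ψ j) = Ψ j := by
      rw [← hAeig, Matrix.mulVec_mulVec, hP j hj]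
    rw [Matrix.mulVec_smul] at this
    nth_rewrite 2 [← this]
    rw [smul_smul, inv_mul_cancel₀ (hlamne j hj), one_smul]
  have hGpHj : ∀ j, j ≠ 0 → Gpᴴ.mulVec (Ψ j) = (lam j)⁻¹ • Ψ j := by
    intro j hj
    have step : (Gpᴴ * A).mulVec (Ψ j) = Ψ j := by
      have : Gpᴴ * A = A * Gp := by rw [← h3, Matrix.conjTranspose_mul, hAH]
      rw [this, ← Matrix.mulVec_mulVec, hGpj j hj, Matrix.mulVec_smul, hAeig, smul_smul,
        inv_mul_cancel₀ (hlamne j hj), one_smul]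
    have : Gpᴴ.mulVec (lam j • Ψ j) = Ψ j := by
      rw [← hAeig, Matrix.mulVec_mulVec, step]
    rw [Matrix.mulVec_smul] at this
    nth_rewrite 2 [← this]
    rw [smul_smul, inv_mul_cancel₀ (hlamne j hj), one_smul]
  -- coefficients of `Gp w`
  have hcoefGp : ∀ j, ⟪toE (Ψ j), toE (Gp.mulVec w)⟫
      = if j = 0 then 0 else (lam j)⁻¹ * ⟪toE (Ψ j), toE w⟫ := by
    intro j
    rw [inner_toE_mulVec]
    by_cases hj : j = 0
    · subst hj
      rw [hGpH0, toE_zero, inner_zero_left, if_pos rfl]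
    · rw [hGpHj j hj, if_neg hj, toE_smul, inner_smul_left]
      congr 1
      simp [hlam, Complex.conj_ofReal]
  -- Parseval
  have hpars : ∀ v : EuclideanSpace ℂ (Fin n), ‖v‖ ^ 2 = ∑ j, ‖⟪toE (Ψ j), v⟫‖ ^ 2 := by
    intro v
    rw [← b.repr.norm_map v, EuclideanSpace.norm_eq, Real.sq_sqrt (by positivity)]
    refine Finset.sum_congr rfl fun j _ => ?_
    rw [b.repr_apply_apply, hb j]
  rw [hpars]
  rw [← Finset.sum_erase_add _ _ (Finset.mem_univ (0 : Fin n))]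
  have h00 : ‖⟪toE (Ψ 0), toE (Gp.mulVec w)⟫‖ ^ 2 = 0 := by
    rw [hcoefGp 0, if_pos rfl, norm_zero]
    ring
  rw [h00, add_zero]
  refine Finset.sum_congr rfl fun j hj => ?_
  have hj0 : j ≠ 0 := Finset.ne_of_mem_erase hj
  rw [hcoefGp j, if_neg hj0, norm_mul, mul_pow, norm_inv]
  have hE : (0 : ℝ) < E j - E 0 := sub_pos.mpr (hground j hj0)
  have : ‖lam j‖ = E j - E 0 := by
    show ‖((E j - E 0 : ℝ) : ℂ)‖ = E j - E 0
    rw [Complex.norm_real, Real.norm_eq_abs]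
    exact abs_of_pos hE
  rw [this, div_eq_mul_inv, mul_comm, inv_pow]
end

section
/- Let A be a positive semidefinite Hermitian n×n complex matrix with A ≠ 0, let α ≥ ‖A‖ (spectral norm), let η > 0 be the smallest nonzero eigenvalue of A, and set δ := η/α. Let p be an odd real polynomial such that |p(x) − (3/4)·(δ/x)| ≤ ε' for all real x with δ ≤ |x| ≤ 1. Then ‖(4/(3η)) · p(α^{-1} A) − A⁺‖ ≤ (4/(3η)) · ε', where p(α^{-1}A) is the evaluation of the polynomial p at the matrix α^{-1}A and A⁺ is the Moore–Penrose pseudoinverse of A. -/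
open Matrix
open scoped Matrix.Norms.L2Operator ComplexOrder

namespace Stmt4Aux

variable {n : ℕ}

/-- Uniqueness of the Moore–Penrose pseudoinverse. -/
lemma pinv_unique (A B C : Matrix (Fin n) (Fin n) ℂ)
    (hB1 : A * B * A = A) (hB2 : B * A * B = B)
    (hB3 : (A * B)ᴴ = A * B) (hB4 : (B * A)ᴴ = B * A)
    (hC1 : A * C * A = A) (hC2 : C * A * C = C)
    (hC3 : (A * C)ᴴ = A * C) (hC4 : (C * A)ᴴ = C * A) : B = C := by
  have hAB : A * B = A * C := by
    have e1 : (A * B) * (A * C) = A * C := by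
      have h : (A * B) * (A * C) = (A * B * A) * C := by noncomm_ring
      rw [h, hB1]
    calc A * B = (A * C * A) * B := by rw [hC1]
      _ = (A * C) * (A * B) := by noncomm_ring
      _ = (A * C)ᴴ * (A * B)ᴴ := by rw [hC3, hB3]
      _ = ((A * B) * (A * C))ᴴ := by simp [conjTranspose_mul, mul_assoc]
      _ = (A * C)ᴴ := by rw [e1]
      _ = A * C := hC3
  have hBA : B * A = C * A := by
    have e1 : (C * A) * (B * A) = C * A := by
      have h : (C * A) * (B * A) = C * (A * B * A) := by noncomm_ring
      rw [h, hB1]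
    calc B * A = B * (A * C * A) := by rw [hC1]
      _ = (B * A) * (C * A) := by noncomm_ring
      _ = (B * A)ᴴ * (C * A)ᴴ := by rw [hB4, hC4]
      _ = ((C * A) * (B * A))ᴴ := by simp [conjTranspose_mul, mul_assoc]
      _ = (C * A)ᴴ := by rw [e1]
      _ = C * A := hC4
  calc B = B * A * B := hB2.symm
    _ = B * (A * C) := by rw [mul_assoc, hAB]
    _ = (B * A) * C := by rw [mul_assoc]
    _ = C * A * C := by rw [hBA]
    _ = C := hC2

/-- Conjugation by a unitary as an `ℝ`-algebra homomorphism. -/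
noncomputable def conjAlgHom (U : Matrix (Fin n) (Fin n) ℂ)
    (hU1 : U * star U = 1) (hU2 : star U * U = 1) :
    Matrix (Fin n) (Fin n) ℂ →ₐ[ℝ] Matrix (Fin n) (Fin n) ℂ where
  toFun X := U * X * star U
  map_one' := by show U * 1 * star U = 1; rw [mul_one, hU1]
  map_mul' X Y := by
    show U * (X * Y) * star U = (U * X * star U) * (U * Y * star U)
    have h : (U * X * star U) * (U * Y * star U) = U * X * (star U * U) * (Y * star U) := by
      noncomm_ring
    rw [h, hU2, mul_one]
    noncomm_ring
  map_zero' := by simp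
  map_add' X Y := by noncomm_ring
  commutes' r := by
    show U * algebraMap ℝ _ r * star U = algebraMap ℝ _ r
    rw [Algebra.algebraMap_eq_smul_one, mul_smul_comm, mul_one, smul_mul_assoc, hU1]

lemma norm_diagonal_le (v : Fin n → ℂ) {c : ℝ} (hc : 0 ≤ c) (h : ∀ i, ‖v i‖ ≤ c) :
    ‖Matrix.diagonal v‖ ≤ c := by
  rw [Matrix.l2_opNorm_def]
  apply ContinuousLinearMap.opNorm_le_bound _ hc
  intro x
  show ‖(WithLp.equiv 2 (Fin n → ℂ)).symm ((Matrix.diagonal v) *ᵥ (WithLp.equiv 2 (Fin n → ℂ)) x)‖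
      ≤ c * ‖x‖
  have hxn : ‖(WithLp.equiv 2 (Fin n → ℂ)).symm ((Matrix.diagonal v) *ᵥ (WithLp.equiv 2 (Fin n → ℂ)) x)‖
      = Real.sqrt (∑ i, ‖v i * x i‖ ^ 2) := by
    rw [EuclideanSpace.norm_eq]
    congr 1
    refine Finset.sum_congr rfl fun i _ => ?_
    congr 1
    simp [Matrix.mulVec_diagonal]
  rw [hxn]
  have hxe : ‖x‖ = Real.sqrt (∑ i, ‖x i‖ ^ 2) := EuclideanSpace.norm_eq x
  rw [hxe, ← Real.sqrt_sq hc, ← Real.sqrt_mul (sq_nonneg c)]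
  apply Real.sqrt_le_sqrt
  rw [Finset.mul_sum]
  refine Finset.sum_le_sum fun i _ => ?_
  rw [norm_mul, mul_pow]
  have h1 : ‖v i‖ ^ 2 ≤ c ^ 2 := pow_le_pow_left₀ (norm_nonneg _) (h i) 2
  exact mul_le_mul_of_nonneg_right h1 (sq_nonneg _)

/-- Any eigenvalue is bounded by the operator norm. -/
lemma eigen_le_norm (A : Matrix (Fin n) (Fin n) ℂ) (c : ℝ) (v : Fin n → ℂ) (hv : v ≠ 0)
    (h : A *ᵥ v = (c : ℂ) • v) : |c| ≤ ‖A‖ := by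
  have h1 : ‖(WithLp.equiv 2 (Fin n → ℂ)).symm (A *ᵥ v)‖
      ≤ ‖A‖ * ‖(WithLp.equiv 2 (Fin n → ℂ)).symm v‖ :=
    Matrix.l2_opNorm_mulVec A ((WithLp.equiv 2 (Fin n → ℂ)).symm v)
  rw [h] at h1
  have h2 : ((WithLp.equiv 2 (Fin n → ℂ)).symm ((c : ℂ) • v) : EuclideanSpace ℂ (Fin n))
      = (c : ℂ) • (WithLp.equiv 2 (Fin n → ℂ)).symm v := rfl
  rw [h2, norm_smul] at h1
  have hvv : ((WithLp.equiv 2 (Fin n → ℂ)).symm v : EuclideanSpace ℂ (Fin n)) ≠ 0 := by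
    intro h0
    exact hv (congrArg (WithLp.equiv 2 (Fin n → ℂ)) h0)
  have hvpos : 0 < ‖((WithLp.equiv 2 (Fin n → ℂ)).symm v : EuclideanSpace ℂ (Fin n))‖ :=
    norm_pos_iff.mpr hvv
  have := le_of_mul_le_mul_right h1 hvpos
  simpa [Complex.norm_real, Real.norm_eq_abs] using this

lemma conj_congr (U : Matrix (Fin n) (Fin n) ℂ) (f g : Fin n → ℂ) (h : ∀ i, f i = g i) :
    U * Matrix.diagonal f * star U = U * Matrix.diagonal g * star U := by
  rw [funext h]

lemma smul_conj_diag (U : Matrix (Fin n) (Fin n) ℂ) (c : ℝ) (f : Fin n → ℝ) :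
    c • (U * Matrix.diagonal (fun i => (f i : ℂ)) * star U)
      = U * Matrix.diagonal (fun i => ((c * f i : ℝ) : ℂ)) * star U := by
  have h1 : (fun i => ((c * f i : ℝ) : ℂ)) = c • (fun i => (f i : ℂ)) := by
    funext i
    rw [Pi.smul_apply, Complex.real_smul]
    push_cast
    ring
  rw [h1, Matrix.diagonal_smul, mul_smul_comm, smul_mul_assoc]

lemma conj_diag_sub (U : Matrix (Fin n) (Fin n) ℂ) (f g : Fin n → ℂ) :
    U * Matrix.diagonal f * star U - U * Matrix.diagonal g * star U
      = U * Matrix.diagonal (f - g) * star U := by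
  have h : f - g = fun i => f i - g i := rfl
  rw [h, ← Matrix.diagonal_sub]
  noncomm_ring

end Stmt4Aux

open Stmt4Aux

set_option maxHeartbeats 1000000 in
/-- If `A ≠ 0` is positive semidefinite with `α ≥ ‖A‖`, smallest nonzero
eigenvalue `η > 0`, and the odd real polynomial `p` satisfies
`|p(x) − (3/4)·(δ/x)| ≤ ε'` for `δ := η/α ≤ |x| ≤ 1`, then
`‖(4/(3η)) p(α⁻¹ A) − A⁺‖ ≤ (4/(3η)) ε'` for the Moore–Penrose pseudoinverse `A⁺` of `A`
(characterized by the four Penrose conditions). -/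
theorem stmt_4 (n : ℕ)
    (A : Matrix (Fin n) (Fin n) ℂ) (hA : A.PosSemidef) (hA0 : A ≠ 0)
    (α : ℝ) (hα : ‖A‖ ≤ α)
    (η : ℝ) (hη : 0 < η)
    (hev : ∃ v : Fin n → ℂ, v ≠ 0 ∧ A.mulVec v = (η : ℂ) • v)
    (hmin : ∀ (μ : ℝ) (v : Fin n → ℂ), v ≠ 0 → A.mulVec v = (μ : ℂ) • v → μ = 0 ∨ η ≤ μ)
    (ε' : ℝ) (p : Polynomial ℝ)
    (hodd : ∀ x : ℝ, p.eval (-x) = - p.eval x)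
    (happrox : ∀ x : ℝ, η / α ≤ |x| → |x| ≤ 1 →
      |p.eval x - 3 / 4 * ((η / α) / x)| ≤ ε')
    (Ap : Matrix (Fin n) (Fin n) ℂ)
    (h1 : A * Ap * A = A) (h2 : Ap * A * Ap = Ap)
    (h3 : (A * Ap)ᴴ = A * Ap) (h4 : (Ap * A)ᴴ = Ap * A) :
    ‖(4 / (3 * η)) • (Polynomial.aeval (α⁻¹ • A) p : Matrix (Fin n) (Fin n) ℂ) - Ap‖
      ≤ (4 / (3 * η)) * ε' := by
  classical
  have hH : A.IsHermitian := hA.1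
  set U : Matrix (Fin n) (Fin n) ℂ := (hH.eigenvectorUnitary : Matrix (Fin n) (Fin n) ℂ) with hUdef
  have hU1 : U * star U = 1 := Unitary.coe_mul_star_self hH.eigenvectorUnitary
  have hU2 : star U * U = 1 := Unitary.coe_star_mul_self hH.eigenvectorUnitary
  set d : Fin n → ℝ := hH.eigenvalues with hddef
  have hspec : A = U * Matrix.diagonal (fun i => (d i : ℂ)) * star U := hH.spectral_theorem
  -- basic positivity facts
  have hApos : 0 < ‖A‖ := norm_pos_iff.mpr hA0
  have hα0 : 0 < α := lt_of_lt_of_le hApos hα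
  -- eigenvalue facts
  have hd0 : ∀ i, 0 ≤ d i := fun i => hA.eigenvalues_nonneg i
  have heig : ∀ i, A *ᵥ ⇑(hH.eigenvectorBasis i) = (d i : ℂ) • ⇑(hH.eigenvectorBasis i) := by
    intro i
    have h := hH.mulVec_eigenvectorBasis i
    rwa [RCLike.real_smul_eq_coe_smul (K := ℂ)] at h
  have hvne : ∀ i, ⇑(hH.eigenvectorBasis i) ≠ (0 : Fin n → ℂ) := by
    intro i h
    exact hH.eigenvectorBasis.orthonormal.ne_zero i (by ext j; exact congrFun h j)
  have hdd : ∀ i, d i = 0 ∨ η ≤ d i := fun i => hmin (d i) _ (hvne i) (heig i)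
  have hdα : ∀ i, d i ≤ α := by
    intro i
    have := eigen_le_norm A (d i) _ (hvne i) (heig i)
    rw [abs_of_nonneg (hd0 i)] at this
    exact le_trans this hα
  have hηα : η ≤ α := by
    obtain ⟨v, hv0, hv⟩ := hev
    have := eigen_le_norm A η v hv0 hv
    rw [abs_of_pos hη] at this
    exact le_trans this hα
  have hδ1 : η / α ≤ 1 := (div_le_one hα0).mpr hηα
  have hε' : 0 ≤ ε' :=
    le_trans (abs_nonneg _) (happrox 1 (by rw [abs_one]; exact hδ1) (by norm_num))
  have hp0 : p.eval 0 = 0 := by have h := hodd 0; rw [neg_zero] at h; linarith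
  -- multiplication of conjugated diagonals
  have hmulφ : ∀ v w : Fin n → ℂ,
      (U * Matrix.diagonal v * star U) * (U * Matrix.diagonal w * star U)
        = U * Matrix.diagonal (v * w) * star U := by
    intro v w
    calc (U * Matrix.diagonal v * star U) * (U * Matrix.diagonal w * star U)
        = U * Matrix.diagonal v * (star U * U) * (Matrix.diagonal w * star U) := by noncomm_ring
      _ = U * (Matrix.diagonal v * Matrix.diagonal w) * star U := by rw [hU2]; noncomm_ring
      _ = U * Matrix.diagonal (v * w) * star U := by rw [Matrix.diagonal_mul_diagonal]; rfl
  have hmulR : ∀ w1 w2 : Fin n → ℝ,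
      (U * Matrix.diagonal (fun i => (w1 i : ℂ)) * star U)
        * (U * Matrix.diagonal (fun i => (w2 i : ℂ)) * star U)
        = U * Matrix.diagonal (fun i => ((w1 i * w2 i : ℝ) : ℂ)) * star U := by
    intro w1 w2
    rw [hmulφ]
    apply conj_congr
    intro i
    push_cast [Pi.mul_apply]
    ring
  -- conjugated real diagonals are Hermitian
  have hstar : ∀ (w : Fin n → ℝ),
      (U * Matrix.diagonal (fun i => (w i : ℂ)) * star U)ᴴ
        = U * Matrix.diagonal (fun i => (w i : ℂ)) * star U := by
    intro w
    have hwst : star (fun i => (w i : ℂ)) = fun i => (w i : ℂ) := by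
      funext i; simp [Pi.star_apply, Complex.conj_ofReal]
    rw [← Matrix.star_eq_conjTranspose, StarMul.star_mul, StarMul.star_mul, star_star]
    rw [show star (Matrix.diagonal fun i => ((w i : ℝ) : ℂ))
        = Matrix.diagonal fun i => ((w i : ℝ) : ℂ) from by
      rw [Matrix.star_eq_conjTranspose, Matrix.diagonal_conjTranspose, hwst]]
    rw [mul_assoc]
  -- the candidate pseudoinverse
  set e : Fin n → ℝ := fun i => if d i = 0 then 0 else (d i)⁻¹ with hedef
  set B : Matrix (Fin n) (Fin n) ℂ := U * Matrix.diagonal (fun i => (e i : ℂ)) * star U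
    with hBdef
  have hded : ∀ i, d i * e i * d i = d i := by
    intro i
    by_cases h : d i = 0 <;> field_simp [hedef, h] <;> simp [hedef, h]
  have hede : ∀ i, e i * d i * e i = e i := by
    intro i
    by_cases h : d i = 0 <;> field_simp [hedef, h] <;> simp [hedef, h]
  have pB1 : A * B * A = A := by
    rw [hspec, hBdef, hmulR, hmulR]
    exact conj_congr _ _ _ fun i => by rw [hded i]
  have pB2 : B * A * B = B := by
    rw [hspec, hBdef, hmulR, hmulR]
    exact conj_congr _ _ _ fun i => by rw [hede i]
  have pB3 : (A * B)ᴴ = A * B := by rw [hspec, hBdef, hmulR]; exact hstar _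
  have pB4 : (B * A)ᴴ = B * A := by rw [hspec, hBdef, hmulR]; exact hstar _
  have hApB : Ap = B := pinv_unique A Ap B h1 h2 h3 h4 pB1 pB2 pB3 pB4
  -- evaluate the polynomial
  have hAsc : α⁻¹ • A = U * Matrix.diagonal (fun i => ((d i / α : ℝ) : ℂ)) * star U := by
    rw [hspec]
    rw [show (α⁻¹ • (U * Matrix.diagonal (fun i => ((d i : ℝ) : ℂ)) * star U) :
        Matrix (Fin n) (Fin n) ℂ)
        = U * Matrix.diagonal (fun i => ((α⁻¹ * d i : ℝ) : ℂ)) * star U from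
      smul_conj_diag U α⁻¹ d]
    exact conj_congr _ _ _ fun i => by rw [inv_mul_eq_div]
  have haeval : (Polynomial.aeval (α⁻¹ • A) p : Matrix (Fin n) (Fin n) ℂ)
      = U * Matrix.diagonal (fun i => ((p.eval (d i / α) : ℝ) : ℂ)) * star U := by
    rw [hAsc]
    rw [show (U * Matrix.diagonal (fun i => ((d i / α : ℝ) : ℂ)) * star U)
        = conjAlgHom U hU1 hU2 (Matrix.diagonal (fun i => ((d i / α : ℝ) : ℂ))) from rfl]
    rw [Polynomial.aeval_algHom_apply]
    rw [show (Matrix.diagonal (fun i => ((d i / α : ℝ) : ℂ)))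
        = Matrix.diagonalAlgHom (R := ℝ) (n := Fin n) (α := ℂ)
            (fun i => ((d i / α : ℝ) : ℂ)) from rfl]
    rw [Polynomial.aeval_algHom_apply]
    have e3 : (Polynomial.aeval (fun i => ((d i / α : ℝ) : ℂ)) p : Fin n → ℂ)
        = fun i => ((p.eval (d i / α) : ℝ) : ℂ) := by
      funext i
      have e4 : (Polynomial.aeval (fun i => ((d i / α : ℝ) : ℂ)) p : Fin n → ℂ) i
          = Polynomial.aeval ((d i / α : ℝ) : ℂ) p :=
        (Polynomial.aeval_algHom_apply (Pi.evalAlgHom ℝ (fun _ => ℂ) i) _ p).symm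
      rw [e4, show ((d i / α : ℝ) : ℂ) = algebraMap ℝ ℂ (d i / α) from rfl,
        Polynomial.aeval_algebraMap_apply_eq_algebraMap_eval]
      simp
    rw [e3]
    rfl
  -- the difference as a conjugated diagonal
  set w : Fin n → ℝ := fun i => (4 / (3 * η)) * p.eval (d i / α) - e i with hwdef
  have hkey : (4 / (3 * η)) • (Polynomial.aeval (α⁻¹ • A) p : Matrix (Fin n) (Fin n) ℂ) - Ap
      = U * Matrix.diagonal (fun i => (w i : ℂ)) * star U := by
    rw [haeval, hApB, hBdef, smul_conj_diag, conj_diag_sub]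
    apply conj_congr
    intro i
    rw [hwdef]
    push_cast [Pi.sub_apply]
    ring
  -- bound the diagonal entries
  have hc4 : 0 < 4 / (3 * η) := by positivity
  have hw : ∀ i, |w i| ≤ 4 / (3 * η) * ε' := by
    intro i
    rcases hdd i with h0 | hge
    · have hwz : w i = 0 := by
        simp [hwdef, hedef, h0, hp0]
      rw [hwz, abs_zero]
      positivity
    · have hdipos : 0 < d i := lt_of_lt_of_le hη hge
      have hxpos : 0 < d i / α := div_pos hdipos hα0
      have hx1 : η / α ≤ |d i / α| := by
        rw [abs_of_pos hxpos]
        gcongr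
      have hx2 : |d i / α| ≤ 1 := by
        rw [abs_of_pos hxpos]
        exact (div_le_one hα0).mpr (hdα i)
      have happ := happrox (d i / α) hx1 hx2
      have hrw : w i = (4 / (3 * η)) * (p.eval (d i / α) - 3 / 4 * ((η / α) / (d i / α))) := by
        rw [hwdef]
        simp only [hedef]
        rw [if_neg (ne_of_gt hdipos)]
        field_simp
      rw [hrw, abs_mul, abs_of_pos hc4]
      exact mul_le_mul_of_nonneg_left happ (le_of_lt hc4)
  -- finish with norm estimates
  have hn : 0 < n := Nat.pos_of_ne_zero (by rintro rfl; exact hA0 (Subsingleton.elim A 0))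
  haveI : Nonempty (Fin n) := ⟨⟨0, hn⟩⟩
  have hUnorm : ‖U‖ = 1 := CStarRing.norm_coe_unitary hH.eigenvectorUnitary
  have hUstar : ‖star U‖ = 1 := by
    rw [Matrix.star_eq_conjTranspose, Matrix.l2_opNorm_conjTranspose]
    exact hUnorm
  have hDnorm : ‖Matrix.diagonal (fun i => (w i : ℂ))‖ ≤ 4 / (3 * η) * ε' := by
    apply norm_diagonal_le _ (by positivity)
    intro i
    rw [Complex.norm_real, Real.norm_eq_abs]
    exact hw i
  rw [hkey]
  calc ‖U * Matrix.diagonal (fun i => (w i : ℂ)) * star U‖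
      ≤ ‖U * Matrix.diagonal (fun i => (w i : ℂ))‖ * ‖star U‖ := norm_mul_le _ _
    _ ≤ ‖U‖ * ‖Matrix.diagonal (fun i => (w i : ℂ))‖ * ‖star U‖ := by
        gcongr
        exact norm_mul_le _ _
    _ = ‖Matrix.diagonal (fun i => (w i : ℂ))‖ := by rw [hUnorm, hUstar, one_mul, mul_one]
    _ ≤ 4 / (3 * η) * ε' := hDnorm
end

section
/- Let H and O be Hermitian n×n complex matrices. Suppose H has an orthonormal eigenbasis Ψ_0, …, Ψ_{n−1} with H Ψ_j = E_j Ψ_j, where E_0 is the smallest eigenvalue and is simple. Let ψ : ℝ → ℂⁿ and E : ℝ → ℝ be differentiable at 0 with ψ(0) = Ψ_0, ‖ψ(h)‖₂ = 1 for all h, and (H − h O) ψ(h) = E(h) ψ(h) for all h in a neighborhood of 0. Then the function h ↦ ⟨ψ(h), O ψ(h)⟩ is differentiable at 0 with derivative (d/dh)⟨ψ(h), O ψ(h)⟩|_{h=0} = 2 ∑_{j ≠ 0} |⟨Ψ_j, O Ψ_0⟩|² / (E_j − E_0). -/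
open Matrix
open scoped ComplexInnerProductSpace

lemma toE_add {n : ℕ} (x y : Fin n → ℂ) : toE (x + y) = toE x + toE y := rfl
lemma herm_inner {n : ℕ} {A : Matrix (Fin n) (Fin n) ℂ} (hA : A.IsHermitian)
    (x y : Fin n → ℂ) : ⟪toE (A.mulVec x), toE y⟫ = ⟪toE x, toE (A.mulVec y)⟫ := by
  have := (Matrix.isHermitian_iff_isSymmetric.1 hA) ((WithLp.equiv 2 _).symm x)
    ((WithLp.equiv 2 _).symm y)
  simpa [Matrix.toEuclideanLin_apply_piLp_toLp, toE] using this

lemma hasDerivAt_toE {n : ℕ} {f : ℝ → Fin n → ℂ} {f' : Fin n → ℂ} {x : ℝ}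
    (hf : HasDerivAt f f' x) : HasDerivAt (fun h => toE (f h)) (toE f') x :=
  (((PiLp.continuousLinearEquiv 2 ℂ (fun _ : Fin n => ℂ)).symm.toContinuousLinearMap.restrictScalars
    ℝ).hasFDerivAt.comp_hasDerivAt x hf)

lemma hasDerivAt_mulVec {n : ℕ} (A : Matrix (Fin n) (Fin n) ℂ) {f : ℝ → Fin n → ℂ}
    {f' : Fin n → ℂ} {x : ℝ} (hf : HasDerivAt f f' x) :
    HasDerivAt (fun h => A.mulVec (f h)) (A.mulVec f') x :=
  ((LinearMap.toContinuousLinearMap A.mulVecLin).restrictScalars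
    ℝ).hasFDerivAt.comp_hasDerivAt x hf

lemma real_smul_mulVec {n : ℕ} (h : ℝ) (O : Matrix (Fin n) (Fin n) ℂ) (x : Fin n → ℂ) :
    (h • O).mulVec x = h • O.mulVec x := by
  have : h • O = ((h : ℂ)) • O := by ext i j; simp [Complex.real_smul]
  rw [this, Matrix.smul_mulVec]
  ext i; simp [Complex.real_smul]

/-- Zero-temperature Lehmann representation of the linear static
susceptibility: for Hermitian `H, O`, an orthonormal eigenbasis `Ψ` of `H` with eigenvalues
`E`, `E 0` smallest and simple, and a normalized eigenvector family `ψ(h)` of `H − h O`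
with eigenvalue `E(h)`, differentiable at `0` with `ψ(0) = Ψ₀`, the function
`h ↦ ⟨ψ(h), O ψ(h)⟩` has derivative `2 ∑_{j ≠ 0} |⟨Ψ_j, O Ψ₀⟩|²/(E_j − E_0)` at `h = 0`. -/
theorem stmt_11 (n : ℕ) [NeZero n]
    (H O : Matrix (Fin n) (Fin n) ℂ)
    (hH : H.IsHermitian) (hO : O.IsHermitian)
    (Ψ : Fin n → (Fin n → ℂ)) (E : Fin n → ℝ)
    (horth : Orthonormal ℂ (fun j => toE (Ψ j)))
    (heig : ∀ j, H.mulVec (Ψ j) = (E j : ℂ) • Ψ j)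
    (hground : ∀ j, j ≠ 0 → E 0 < E j)
    (ψ : ℝ → (Fin n → ℂ)) (En : ℝ → ℝ)
    (hψ0 : ψ 0 = Ψ 0)
    (hψdiff : DifferentiableAt ℝ ψ 0)
    (hEdiff : DifferentiableAt ℝ En 0)
    (hnorm : ∀ h : ℝ, ‖toE (ψ h)‖ = 1)
    (heig' : ∀ᶠ h in nhds (0 : ℝ),
      (H - h • O).mulVec (ψ h) = ((En h : ℝ) : ℂ) • ψ h) :
    HasDerivAt (fun h : ℝ => ⟪toE (ψ h), toE (O.mulVec (ψ h))⟫)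
      (((2 * ∑ j ∈ Finset.univ.erase 0,
          ‖⟪toE (Ψ j), toE (O.mulVec (Ψ 0))⟫‖ ^ 2 / (E j - E 0) : ℝ) : ℂ)) 0 := by
  classical
  haveI : Nonempty (Fin n) := Fin.pos_iff_nonempty.mp (Nat.pos_of_ne_zero (NeZero.ne n))
  set v := deriv ψ 0 with hvdef
  have hv : HasDerivAt ψ v 0 := hψdiff.hasDerivAt
  have he : HasDerivAt En (deriv En 0) 0 := hEdiff.hasDerivAt
  set e' : ℂ := ((deriv En 0 : ℝ) : ℂ) with he'def
  have hΨ0ne : Ψ 0 ≠ 0 := by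
    intro hcon
    have h1 := hnorm 0
    rw [hψ0, hcon] at h1
    have h2 : toE (0 : Fin n → ℂ) = 0 := rfl
    rw [h2] at h1
    simp at h1
  have hEn0 : En 0 = E 0 := by
    have h0 := heig'.self_of_nhds
    simp only [zero_smul, sub_zero, hψ0] at h0
    rw [heig 0] at h0
    have hsub : (((E 0 : ℂ)) - ((En 0 : ℂ))) • Ψ 0 = 0 := by
      rw [sub_smul, h0, sub_self]
    rcases smul_eq_zero.1 hsub with hc | hc
    · have := sub_eq_zero.1 hc
      exact_mod_cast this.symm
    · exact absurd hc hΨ0ne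
  have hw1 : HasDerivAt (fun h : ℝ => (H - h • O).mulVec (ψ h))
      (H.mulVec v - O.mulVec (Ψ 0)) 0 := by
    have heq : (fun h : ℝ => (H - h • O).mulVec (ψ h))
        = fun h : ℝ => H.mulVec (ψ h) - h • O.mulVec (ψ h) := by
      funext h; rw [Matrix.sub_mulVec, real_smul_mulVec]
    rw [heq]
    have h2 : HasDerivAt (fun h : ℝ => h • O.mulVec (ψ h))
        ((0 : ℝ) • O.mulVec v + (1 : ℝ) • O.mulVec (ψ 0)) 0 :=
      (hasDerivAt_id 0).smul (hasDerivAt_mulVec O hv)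
    simp only [zero_smul, one_smul, zero_add, hψ0] at h2
    exact (hasDerivAt_mulVec H hv).sub h2
  have hw2 : HasDerivAt (fun h : ℝ => ((En h : ℝ) : ℂ) • ψ h)
      (e' • Ψ 0 + ((E 0 : ℝ) : ℂ) • v) 0 := by
    have hc : HasDerivAt (fun h : ℝ => ((En h : ℝ) : ℂ)) e' 0 :=
      Complex.ofRealCLM.hasFDerivAt.comp_hasDerivAt 0 he
    have h3 := hc.smul hv
    simp only [hψ0, hEn0] at h3 ⊢
    rw [add_comm]
    exact h3
  have key : H.mulVec v - O.mulVec (Ψ 0) = e' • Ψ 0 + ((E 0 : ℝ) : ℂ) • v :=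
    hw1.unique (hw2.congr_of_eventuallyEq heig')
  have horthij : ∀ i j : Fin n, ⟪toE (Ψ i), toE (Ψ j)⟫ = if i = j then 1 else 0 :=
    orthonormal_iff_ite.1 horth
  -- first-order perturbation coefficients
  have hcoef : ∀ j : Fin n, j ≠ 0 →
      ⟪toE (Ψ j), toE v⟫
        = ⟪toE (Ψ j), toE (O.mulVec (Ψ 0))⟫ / (((E j : ℝ) : ℂ) - ((E 0 : ℝ) : ℂ)) := by
    intro j hj
    have hne : (((E j : ℝ) : ℂ)) - ((E 0 : ℝ) : ℂ) ≠ 0 := by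
      rw [sub_ne_zero]
      exact_mod_cast (hground j hj).ne'
    have h1 := congrArg (fun x : Fin n → ℂ => ⟪toE (Ψ j), toE x⟫) key
    simp only [toE_sub, toE_add, toE_smul, inner_sub_right, inner_add_right,
      inner_smul_right] at h1
    have hH1 : ⟪toE (Ψ j), toE (H.mulVec v)⟫ = ((E j : ℝ) : ℂ) * ⟪toE (Ψ j), toE v⟫ := by
      rw [← herm_inner hH, heig j, toE_smul, inner_smul_left, Complex.conj_ofReal]
    rw [hH1, horthij j 0, if_neg hj] at h1
    field_simp
    linear_combination h1
  -- Re ⟪Ψ0, v⟫ = 0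
  have hre0 : (⟪toE (Ψ 0), toE v⟫).re = 0 := by
    have hN : HasDerivAt (fun h : ℝ => ⟪toE (ψ h), toE (ψ h)⟫)
        (⟪toE (ψ 0), toE v⟫ + ⟪toE v, toE (ψ 0)⟫) 0 :=
      (hasDerivAt_toE hv).inner ℂ (hasDerivAt_toE hv)
    have hconst : HasDerivAt (fun h : ℝ => ⟪toE (ψ h), toE (ψ h)⟫) 0 0 := by
      have heq : (fun h : ℝ => ⟪toE (ψ h), toE (ψ h)⟫) = fun _ => (1 : ℂ) := by
        funext h
        rw [inner_self_eq_norm_sq_to_K, hnorm h]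
        norm_num
      rw [heq]; exact hasDerivAt_const 0 1
    have h4 := hN.unique hconst
    rw [hψ0] at h4
    rw [show ⟪toE v, toE (Ψ 0)⟫ = starRingEnd ℂ ⟪toE (Ψ 0), toE v⟫ from
      (inner_conj_symm _ _).symm, Complex.add_conj] at h4
    have := Complex.ofReal_eq_zero.mp h4
    linarith
  -- orthonormal basis
  have hcard : Fintype.card (Fin n) = Module.finrank ℂ (EuclideanSpace ℂ (Fin n)) := by simp
  set bb := basisOfLinearIndependentOfCardEqFinrank horth.linearIndependent hcard with hbbdef
  have hbb : ⇑bb = fun j => toE (Ψ j) := coe_basisOfLinearIndependentOfCardEqFinrank _ _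
  set b : OrthonormalBasis (Fin n) ℂ (EuclideanSpace ℂ (Fin n)) :=
    bb.toOrthonormalBasis (by rw [hbb]; exact horth) with hbdef
  have hb : ∀ j, b j = toE (Ψ j) := by
    intro j
    rw [hbdef]
    rw [show ⇑(bb.toOrthonormalBasis _) = ⇑bb from Module.Basis.coe_toOrthonormalBasis bb _, hbb]
  set w : EuclideanSpace ℂ (Fin n) := toE (O.mulVec (Ψ 0)) with hwdef
  set z : ℂ := ⟪w, toE v⟫ with hzdef
  have hwreal : (⟪w, toE (Ψ 0)⟫).im = 0 := by
    have h1 : ⟪w, toE (Ψ 0)⟫ = ⟪toE (Ψ 0), w⟫ := herm_inner hO (Ψ 0) (Ψ 0)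
    have h2 : starRingEnd ℂ ⟪w, toE (Ψ 0)⟫ = ⟪w, toE (Ψ 0)⟫ := by
      rw [inner_conj_symm, ← h1]
    exact Complex.conj_eq_iff_im.mp h2
  have hzsum : z = ∑ j : Fin n, ⟪w, b j⟫ * ⟪b j, toE v⟫ :=
    (b.sum_inner_mul_inner w (toE v)).symm
  have hzre : z.re = ∑ j ∈ Finset.univ.erase 0, ‖⟪toE (Ψ j), w⟫‖ ^ 2 / (E j - E 0) := by
    simp only [hzsum, hb, Complex.re_sum]
    rw [← Finset.add_sum_erase _ _ (Finset.mem_univ (0 : Fin n))]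
    have hterm0 : (⟪w, toE (Ψ 0)⟫ * ⟪toE (Ψ 0), toE v⟫).re = 0 := by
      rw [Complex.mul_re, hwreal, hre0]; ring
    rw [hterm0, zero_add]
    refine Finset.sum_congr rfl fun j hj => ?_
    have hj0 : j ≠ 0 := Finset.ne_of_mem_erase hj
    rw [hcoef j hj0]
    rw [show ⟪w, toE (Ψ j)⟫ = starRingEnd ℂ ⟪toE (Ψ j), w⟫ from (inner_conj_symm _ _).symm]
    rw [mul_div_assoc', mul_comm (starRingEnd ℂ ⟪toE (Ψ j), w⟫) ⟪toE (Ψ j), w⟫,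
      Complex.mul_conj, Complex.normSq_eq_norm_sq,
      ← Complex.ofReal_sub, ← Complex.ofReal_div, Complex.ofReal_re]
  have hmain : HasDerivAt (fun h : ℝ => ⟪toE (ψ h), toE (O.mulVec (ψ h))⟫)
      (⟪toE (ψ 0), toE (O.mulVec v)⟫ + ⟪toE v, toE (O.mulVec (ψ 0))⟫) 0 :=
    (hasDerivAt_toE hv).inner ℂ (hasDerivAt_toE (hasDerivAt_mulVec O hv))
  have hval : ⟪toE (ψ 0), toE (O.mulVec v)⟫ + ⟪toE v, toE (O.mulVec (ψ 0))⟫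
      = ((2 * ∑ j ∈ Finset.univ.erase 0,
          ‖⟪toE (Ψ j), toE (O.mulVec (Ψ 0))⟫‖ ^ 2 / (E j - E 0) : ℝ) : ℂ) := by
    rw [hψ0]
    have h1 : ⟪toE (Ψ 0), toE (O.mulVec v)⟫ = z := by
      rw [hzdef, hwdef, herm_inner hO]
    have h2 : ⟪toE v, w⟫ = starRingEnd ℂ z := by rw [hzdef, inner_conj_symm]
    rw [← hwdef, h1, h2, Complex.add_conj, hzre]
  exact hval ▸ hmain
end

section
/- Let H and H_I be Hermitian n×n complex matrices. Suppose H has an orthonormal eigenbasis Ψ_0, …, Ψ_{n−1} with H Ψ_j = E_j Ψ_j, where E_0 is the smallest eigenvalue and is simple. Let ψ : ℝ → ℂⁿ and E : ℝ → ℝ be differentiable at 0 with ψ(0) = Ψ_0, ‖ψ(ε)‖₂ = 1 for all ε, and (H + ε H_I) ψ(ε) = E(ε) ψ(ε) for all ε in a neighborhood of 0. Then ‖ψ'(0)‖₂² − |⟨Ψ_0, ψ'(0)⟩|² = ∑_{j ≠ 0} |⟨Ψ_j, H_I Ψ_0⟩|² / (E_j − E_0)². -/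
open Matrix
open scoped ComplexInnerProductSpace

private lemma parseval_aux {n : ℕ} (b : OrthonormalBasis (Fin n) ℂ (EuclideanSpace ℂ (Fin n)))
    (x : EuclideanSpace ℂ (Fin n)) :
    ‖x‖ ^ 2 = ∑ j, ‖⟪b j, x⟫‖ ^ 2 := by
  have h1 : ‖b.repr x‖ = ‖x‖ := b.repr.norm_map x
  rw [← h1, EuclideanSpace.norm_eq, Real.sq_sqrt (by positivity)]
  exact Finset.sum_congr rfl fun j _ => by rw [b.repr_apply_apply]

/-- Geometric formula for the fidelity susceptibility: for Hermitian
`H, H_I`, an orthonormal eigenbasis `Ψ` of `H` with eigenvalues `E`, `E 0` smallest and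
simple, and a normalized eigenvector family `ψ(ε)` of `H + ε H_I` with eigenvalue `E(ε)`,
differentiable at `0` with `ψ(0) = Ψ₀` and derivative `ψ'`,
`‖ψ'(0)‖² − |⟨Ψ₀, ψ'(0)⟩|² = ∑_{j ≠ 0} |⟨Ψ_j, H_I Ψ₀⟩|²/(E_j − E_0)²`. -/
theorem stmt_12 (n : ℕ) [NeZero n]
    (H HI : Matrix (Fin n) (Fin n) ℂ)
    (hH : H.IsHermitian) (hHI : HI.IsHermitian)
    (Ψ : Fin n → (Fin n → ℂ)) (E : Fin n → ℝ)
    (horth : Orthonormal ℂ (fun j => toE (Ψ j)))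
    (heig : ∀ j, H.mulVec (Ψ j) = (E j : ℂ) • Ψ j)
    (hground : ∀ j, j ≠ 0 → E 0 < E j)
    (ψ : ℝ → (Fin n → ℂ)) (En : ℝ → ℝ) (ψ' : Fin n → ℂ)
    (hψ0 : ψ 0 = Ψ 0)
    (hψderiv : HasDerivAt ψ ψ' 0)
    (hEdiff : DifferentiableAt ℝ En 0)
    (hnorm : ∀ ε : ℝ, ‖toE (ψ ε)‖ = 1)
    (heig' : ∀ᶠ ε in nhds (0 : ℝ),
      (H + ε • HI).mulVec (ψ ε) = ((En ε : ℝ) : ℂ) • ψ ε) :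
    ‖toE ψ'‖ ^ 2 - ‖⟪toE (Ψ 0), toE ψ'⟫‖ ^ 2
      = ∑ j ∈ Finset.univ.erase 0,
          ‖⟪toE (Ψ j), toE (HI.mulVec (Ψ 0))⟫‖ ^ 2 / (E j - E 0) ^ 2 := by
  haveI : Nonempty (Fin n) := ⟨0⟩
  set e' := deriv En 0 with he'
  -- derivative of the left-hand side of the eigenvalue equation
  have hF1 : HasDerivAt (fun ε : ℝ => H.mulVec (ψ ε)) (H.mulVec ψ') 0 := by
    have := ((H.mulVecLin.toContinuousLinearMap.restrictScalars
      ℝ).hasFDerivAt).comp_hasDerivAt 0 hψderiv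
    exact this
  have hg : HasDerivAt (fun ε : ℝ => HI.mulVec (ψ ε)) (HI.mulVec ψ') 0 := by
    have := ((HI.mulVecLin.toContinuousLinearMap.restrictScalars
      ℝ).hasFDerivAt).comp_hasDerivAt 0 hψderiv
    exact this
  have hF : HasDerivAt (fun ε : ℝ => (H + ε • HI).mulVec (ψ ε))
      (H.mulVec ψ' + HI.mulVec (Ψ 0)) 0 := by
    have h2 : HasDerivAt (fun ε : ℝ => ε • HI.mulVec (ψ ε))
        ((0:ℝ) • HI.mulVec ψ' + (1:ℝ) • HI.mulVec (ψ 0)) 0 := by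
      exact (hasDerivAt_id' (0:ℝ)).smul hg
    rw [hψ0] at h2
    have := hF1.add h2
    simp only [zero_smul, one_smul, zero_add] at this
    refine this.congr_of_eventuallyEq (Filter.Eventually.of_forall fun ε => ?_)
    simp only [Pi.add_apply]
    rw [Matrix.add_mulVec, Matrix.smul_mulVec]
  -- derivative of the right-hand side
  have hG : HasDerivAt (fun ε : ℝ => ((En ε : ℝ) : ℂ) • ψ ε)
      (((En 0 : ℝ) : ℂ) • ψ' + (e' : ℂ) • Ψ 0) 0 := by
    have hc : HasDerivAt (fun ε : ℝ => ((En ε : ℝ) : ℂ)) (e' : ℂ) 0 :=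
      hEdiff.hasDerivAt.ofReal_comp
    have := hc.smul hψderiv
    rwa [hψ0] at this
  have key : H.mulVec ψ' + HI.mulVec (Ψ 0)
      = ((En 0 : ℝ) : ℂ) • ψ' + (e' : ℂ) • Ψ 0 :=
    hF.unique (hG.congr_of_eventuallyEq heig')
  -- `En 0 = E 0`
  have hne : toE (Ψ 0) ≠ 0 := horth.ne_zero 0
  have hne' : Ψ 0 ≠ 0 := by
    intro h; apply hne; simp [toE, h]
  have hEn0 : En 0 = E 0 := by
    have h0 := heig'.self_of_nhds
    rw [zero_smul, add_zero, hψ0, heig 0] at h0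
    have : ((En 0 : ℝ) : ℂ) = ((E 0 : ℝ) : ℂ) :=
      smul_left_injective ℂ hne' h0.symm
    exact_mod_cast this
  rw [hEn0] at key
  -- the symmetric operator
  have hsym := (Matrix.isHermitian_iff_isSymmetric.mp hH)
  -- coefficients
  set c : Fin n → ℂ := fun j => ⟪toE (Ψ j), toE ψ'⟫ with hc
  set A : Fin n → ℂ := fun j => ⟪toE (Ψ j), toE (HI.mulVec (Ψ 0))⟫ with hA
  have hcj : ∀ j, j ≠ 0 → c j = A j / ((E 0 : ℂ) - (E j : ℂ)) := by
    intro j hj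
    have hinner := congrArg (fun v => ⟪toE (Ψ j), toE v⟫) key
    have hlin : ∀ u v : Fin n → ℂ, toE (u + v) = toE u + toE v := fun u v => rfl
    have hsmul : ∀ (a : ℂ) (v : Fin n → ℂ), toE (a • v) = a • toE v := fun a v => rfl
    simp only [hlin, hsmul, inner_add_right, inner_smul_right] at hinner
    -- ⟪Ψ j, H ψ'⟫ = E j * c j
    have hHj : ⟪toE (Ψ j), toE (H.mulVec ψ')⟫ = (E j : ℂ) * c j := by
      have e1 : toE (H.mulVec ψ') = Matrix.toEuclideanLin H (toE ψ') := rfl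
      have e2 : toE (H.mulVec (Ψ j)) = Matrix.toEuclideanLin H (toE (Ψ j)) := rfl
      rw [e1, ← hsym (toE (Ψ j)) (toE ψ'), ← e2, heig j, hsmul,
        inner_smul_left, Complex.conj_ofReal]
    have horth0 : ⟪toE (Ψ j), toE (Ψ 0)⟫ = 0 := horth.2 hj
    rw [hHj, horth0, mul_zero, add_zero] at hinner
    have hinner' : (E j : ℂ) * c j + A j = (E 0 : ℂ) * c j := hinner
    have hEne : ((E 0 : ℂ) - (E j : ℂ)) ≠ 0 := by
      have := hground j hj
      intro h
      have : (E 0 : ℂ) = (E j : ℂ) := by linear_combination h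
      have : E 0 = E j := by exact_mod_cast this
      linarith [hground j hj]
    rw [eq_div_iff hEne]
    linear_combination (-1 : ℂ) * hinner'
  -- Parseval
  have hcard : Fintype.card (Fin n) = Module.finrank ℂ (EuclideanSpace ℂ (Fin n)) := by
    simp
  set b : OrthonormalBasis (Fin n) ℂ (EuclideanSpace ℂ (Fin n)) :=
    (basisOfOrthonormalOfCardEqFinrank horth hcard).toOrthonormalBasis
      (by rwa [coe_basisOfOrthonormalOfCardEqFinrank]) with hbdef
  have hb : ∀ j, b j = toE (Ψ j) := by
    intro j
    rw [hbdef, Module.Basis.coe_toOrthonormalBasis, coe_basisOfOrthonormalOfCardEqFinrank]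
  have hpars : ‖toE ψ'‖ ^ 2 = ∑ j, ‖c j‖ ^ 2 := by
    rw [parseval_aux b (toE ψ')]
    exact Finset.sum_congr rfl fun j _ => by rw [hb j]
  have hsplit : ∑ j, ‖c j‖ ^ 2
      = ∑ j ∈ Finset.univ.erase 0, ‖c j‖ ^ 2 + ‖c 0‖ ^ 2 :=
    (Finset.sum_erase_add _ _ (Finset.mem_univ 0)).symm
  have hterm : ∀ j ∈ Finset.univ.erase 0,
      ‖c j‖ ^ 2 = ‖A j‖ ^ 2 / (E j - E 0) ^ 2 := by
    intro j hj
    have hj0 : j ≠ 0 := Finset.ne_of_mem_erase hj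
    rw [hcj j hj0, norm_div]
    have : ‖(E 0 : ℂ) - (E j : ℂ)‖ = |E 0 - E j| := by
      rw [← Complex.ofReal_sub, Complex.norm_real, Real.norm_eq_abs]
    rw [div_pow, this, sq_abs]
    ring_nf
  rw [hpars, hsplit]
  have : ‖⟪toE (Ψ 0), toE ψ'⟫‖ = ‖c 0‖ := rfl
  rw [this]
  rw [Finset.sum_congr rfl hterm]
  ring
end

section
/- Let H and H_I be Hermitian n×n complex matrices. Suppose H has an orthonormal eigenbasis Ψ_0, …, Ψ_{n−1} with H Ψ_j = E_j Ψ_j, where E_0 is the smallest eigenvalue and is simple. Let ψ : ℝ → ℂⁿ and E : ℝ → ℝ be differentiable at 0 with ψ(0) = Ψ_0, ‖ψ(ε)‖₂ = 1 for all ε, and (H + ε H_I) ψ(ε) = E(ε) ψ(ε) for all ε in a neighborhood of 0. Let P⊥ := I − Ψ_0 Ψ_0* and let (H − E_0)⁺ := ∑_{j ≠ 0} (E_j − E_0)^{-1} Ψ_j Ψ_j*. Then P⊥ ψ'(0) = −(H − E_0)⁺ H_I Ψ_0. -/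
open Matrix
open scoped ComplexInnerProductSpace

lemma vecMulVec_mulVec' {n : ℕ} (a b c : Fin n → ℂ) :
    vecMulVec a b *ᵥ c = (b ⬝ᵥ c) • a := by
  funext i
  simp [vecMulVec_apply, mulVec, dotProduct, Finset.mul_sum, mul_assoc, mul_comm, mul_left_comm]

lemma sum_mulVec' {n : ℕ} (s : Finset (Fin n)) (M : Fin n → Matrix (Fin n) (Fin n) ℂ)
    (v : Fin n → ℂ) : (∑ j ∈ s, M j) *ᵥ v = ∑ j ∈ s, (M j) *ᵥ v := by
  funext i
  simp only [Matrix.mulVec, dotProduct, Finset.sum_apply, Matrix.sum_apply,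
    Finset.sum_mul]
  rw [Finset.sum_comm]

lemma dotProduct_sum' {n : ℕ} (s : Finset (Fin n)) (a : Fin n → ℂ) (f : Fin n → Fin n → ℂ) :
    a ⬝ᵥ (∑ j ∈ s, f j) = ∑ j ∈ s, a ⬝ᵥ f j := by
  simp only [dotProduct, Finset.sum_apply, Finset.mul_sum]
  rw [Finset.sum_comm]

/-- First-order eigenvector perturbation formula: with `H, H_I` Hermitian,
`Ψ` an orthonormal eigenbasis of `H` with eigenvalues `E`, `E 0` smallest and simple, and a
normalized eigenvector family `ψ(ε)` of `H + ε H_I` with eigenvalue `E(ε)`, differentiable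
at `0` with `ψ(0) = Ψ₀` and derivative `ψ'`, setting `P⊥ = I − Ψ₀Ψ₀*` and
`(H − E₀)⁺ = ∑_{j ≠ 0} (E_j − E_0)⁻¹ Ψ_j Ψ_j*`, one has `P⊥ ψ'(0) = −(H − E₀)⁺ H_I Ψ₀`. -/
theorem stmt_13 (n : ℕ) [NeZero n]
    (H HI : Matrix (Fin n) (Fin n) ℂ)
    (hH : H.IsHermitian) (hHI : HI.IsHermitian)
    (Ψ : Fin n → (Fin n → ℂ)) (E : Fin n → ℝ)
    (horth : Orthonormal ℂ (fun j => toE (Ψ j)))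
    (heig : ∀ j, H.mulVec (Ψ j) = (E j : ℂ) • Ψ j)
    (hground : ∀ j, j ≠ 0 → E 0 < E j)
    (ψ : ℝ → (Fin n → ℂ)) (En : ℝ → ℝ) (ψ' : Fin n → ℂ)
    (hψ0 : ψ 0 = Ψ 0)
    (hψderiv : HasDerivAt ψ ψ' 0)
    (hEdiff : DifferentiableAt ℝ En 0)
    (hnorm : ∀ ε : ℝ, ‖toE (ψ ε)‖ = 1)
    (heig' : ∀ᶠ ε in nhds (0 : ℝ),
      (H + ε • HI).mulVec (ψ ε) = ((En ε : ℝ) : ℂ) • ψ ε)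
    (Pperp Gplus : Matrix (Fin n) (Fin n) ℂ)
    (hPperp : Pperp = 1 - vecMulVec (Ψ 0) (star (Ψ 0)))
    (hGplus : Gplus = ∑ j ∈ Finset.univ.erase 0,
        (((E j - E 0 : ℝ) : ℂ))⁻¹ • vecMulVec (Ψ j) (star (Ψ j))) :
    Pperp.mulVec ψ' = - Gplus.mulVec (HI.mulVec (Ψ 0)) := by
  -- orthonormality in dot-product form
  have hdot : ∀ j k, star (Ψ j) ⬝ᵥ Ψ k = if j = k then (1:ℂ) else 0 := by
    intro j k
    have := (orthonormal_iff_ite.mp horth) j k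
    rw [dotProduct_comm]
    simpa [toE, EuclideanSpace.inner_toLp_toLp] using this
  -- En 0 = E 0
  have h0 : H *ᵥ Ψ 0 = ((En 0 : ℝ) : ℂ) • Ψ 0 := by
    have := heig'.self_of_nhds
    simpa [hψ0] using this
  have hΨ0ne : Ψ 0 ≠ 0 := by
    intro h
    have := hdot 0 0
    simp [h] at this
  have hE00 : ((En 0 : ℝ) : ℂ) = ((E 0 : ℝ) : ℂ) := by
    have h1 : (((En 0 : ℝ) : ℂ) - ((E 0 : ℝ) : ℂ)) • Ψ 0 = 0 := by
      rw [sub_smul, ← h0, heig 0, sub_self]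
    rcases smul_eq_zero.mp h1 with h | h
    · exact sub_eq_zero.mp h
    · exact absurd h hΨ0ne
  -- componentwise derivatives
  have hψi : ∀ i, HasDerivAt (fun ε => ψ ε i) (ψ' i) 0 := by
    intro i
    exact (ContinuousLinearMap.proj (R := ℝ) (φ := fun _ : Fin n => ℂ) i).hasFDerivAt.comp_hasDerivAt 0 hψderiv
  have hEn' : HasDerivAt (fun ε => ((En ε : ℝ) : ℂ)) ((deriv En 0 : ℝ) : ℂ) 0 :=
    hEdiff.hasDerivAt.ofReal_comp
  set d : ℂ := ((deriv En 0 : ℝ) : ℂ) with hd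
  -- the key first-order identity
  have key : ∀ i, (HI *ᵥ Ψ 0) i + (H *ᵥ ψ') i = d * Ψ 0 i + ((E 0 : ℝ) : ℂ) * ψ' i := by
    intro i
    have hF : HasDerivAt (fun ε : ℝ => ∑ k, (H i k + (ε : ℂ) * HI i k) * ψ ε k)
        (∑ k, (HI i k * Ψ 0 k + H i k * ψ' k)) 0 := by
      apply HasDerivAt.fun_sum
      intro k _
      have hc : HasDerivAt (fun ε : ℝ => (ε : ℂ)) 1 0 := by
        simpa using (hasDerivAt_id (0:ℝ)).ofReal_comp
      have h1 : HasDerivAt (fun ε : ℝ => H i k + (ε : ℂ) * HI i k) (HI i k) 0 := by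
        simpa using (hc.mul_const (HI i k)).const_add (H i k)
      have := h1.fun_mul (hψi k)
      simpa [hψ0] using this
    have hG : HasDerivAt (fun ε : ℝ => ((En ε : ℝ) : ℂ) * ψ ε i)
        (d * Ψ 0 i + ((En 0 : ℝ) : ℂ) * ψ' i) 0 := by
      simpa [hψ0] using hEn'.fun_mul (hψi i)
    have hFG : (fun ε : ℝ => ∑ k, (H i k + (ε : ℂ) * HI i k) * ψ ε k)
        =ᶠ[nhds (0:ℝ)] (fun ε : ℝ => ((En ε : ℝ) : ℂ) * ψ ε i) := by
      filter_upwards [heig'] with ε hε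
      have := congrFun hε i
      simpa [Matrix.mulVec, dotProduct, Matrix.add_apply, Matrix.smul_apply,
        Complex.real_smul, add_mul, Pi.smul_apply, smul_eq_mul] using this
    have hF' : HasDerivAt (fun ε : ℝ => ∑ k, (H i k + (ε : ℂ) * HI i k) * ψ ε k)
        (d * Ψ 0 i + ((En 0 : ℝ) : ℂ) * ψ' i) 0 := hG.congr_of_eventuallyEq hFG
    have := hF.unique hF'
    rw [hE00] at this
    calc (HI *ᵥ Ψ 0) i + (H *ᵥ ψ') i
        = ∑ k, (HI i k * Ψ 0 k + H i k * ψ' k) := by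
          simp [Matrix.mulVec, dotProduct, Finset.sum_add_distrib]
      _ = _ := this
  have keyv : HI *ᵥ Ψ 0 + H *ᵥ ψ' = d • Ψ 0 + ((E 0 : ℝ) : ℂ) • ψ' := by
    funext i
    simpa using key i
  -- Hermitian property in dot-product form
  have hherm : ∀ k (v : Fin n → ℂ),
      star (Ψ k) ⬝ᵥ (H *ᵥ v) = ((E k : ℝ) : ℂ) * (star (Ψ k) ⬝ᵥ v) := by
    intro k v
    have h1 : star (Ψ k) ᵥ* H = ((E k : ℝ) : ℂ) • star (Ψ k) := by
      conv_lhs => rw [← hH.eq]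
      rw [← Matrix.star_mulVec, heig k, star_smul]
      simp [Complex.star_def, Complex.conj_ofReal]
    rw [Matrix.dotProduct_mulVec, h1, smul_dotProduct, smul_eq_mul]
  set w : Fin n → ℂ := HI *ᵥ Ψ 0 with hw
  -- the coefficient identity for k ≠ 0
  have hck : ∀ k, k ≠ 0 →
      star (Ψ k) ⬝ᵥ ψ' = -(((E k - E 0 : ℝ) : ℂ))⁻¹ * (star (Ψ k) ⬝ᵥ w) := by
    intro k hk
    have h1 := congrArg (fun v => star (Ψ k) ⬝ᵥ v) keyv
    simp only [dotProduct_add, dotProduct_smul, smul_eq_mul, hherm] at h1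
    rw [hdot k 0, if_neg hk, mul_zero] at h1
    have hne : (((E k - E 0 : ℝ) : ℂ)) ≠ 0 :=
      Complex.ofReal_ne_zero.mpr (sub_ne_zero.mpr (ne_of_gt (hground k hk)))
    have h2 : ((E k - E 0 : ℝ) : ℂ) * (star (Ψ k) ⬝ᵥ ψ') = -(star (Ψ k) ⬝ᵥ w) := by
      push_cast
      linear_combination h1
    calc star (Ψ k) ⬝ᵥ ψ'
        = (((E k - E 0 : ℝ) : ℂ))⁻¹ * (((E k - E 0 : ℝ) : ℂ) * (star (Ψ k) ⬝ᵥ ψ')) := by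
          rw [← mul_assoc, inv_mul_cancel₀ hne, one_mul]
      _ = -(((E k - E 0 : ℝ) : ℂ))⁻¹ * (star (Ψ k) ⬝ᵥ w) := by rw [h2]; ring
  -- coordinates of both sides agree
  have hcoord : ∀ k, star (Ψ k) ⬝ᵥ (Pperp *ᵥ ψ') = star (Ψ k) ⬝ᵥ (-(Gplus *ᵥ w)) := by
    intro k
    have hL : Pperp *ᵥ ψ' = ψ' - (star (Ψ 0) ⬝ᵥ ψ') • Ψ 0 := by
      rw [hPperp, Matrix.sub_mulVec, Matrix.one_mulVec, vecMulVec_mulVec']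
    have hR : Gplus *ᵥ w = ∑ j ∈ Finset.univ.erase 0,
        ((((E j - E 0 : ℝ) : ℂ))⁻¹ * (star (Ψ j) ⬝ᵥ w)) • Ψ j := by
      rw [hGplus, sum_mulVec' _ _ _]
      refine Finset.sum_congr rfl fun j _ => ?_
      rw [Matrix.smul_mulVec, vecMulVec_mulVec', smul_smul]
    rw [hL, dotProduct_neg, hR, dotProduct_sum' _ _ _]
    simp only [dotProduct_sub, dotProduct_smul, smul_eq_mul, hdot]
    rcases eq_or_ne k 0 with hk | hk
    · subst hk
      rw [Finset.sum_eq_zero]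
      · simp
      · intro j hj
        rw [if_neg (Finset.ne_of_mem_erase hj).symm, mul_zero]
    · rw [Finset.sum_eq_single k]
      · rw [if_pos rfl, if_neg hk, mul_zero, sub_zero, mul_one, hck k hk]
        ring
      · intro j hj hjk
        rw [if_neg (fun h => hjk h.symm), mul_zero]
      · intro h
        exact absurd (Finset.mem_erase.mpr ⟨hk, Finset.mem_univ k⟩) h
  -- conclude from unitarity of the eigenbasis
  set U : Matrix (Fin n) (Fin n) ℂ := Matrix.of (fun k i => star (Ψ k i)) with hU
  have hUmv : ∀ v : Fin n → ℂ, U *ᵥ v = fun k => star (Ψ k) ⬝ᵥ v := by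
    intro v; funext k; simp [hU, Matrix.mulVec, dotProduct]
  have hUU : U * Uᴴ = 1 := by
    ext k l
    have := hdot k l
    simpa [hU, Matrix.mul_apply, Matrix.conjTranspose_apply, dotProduct,
      Matrix.one_apply] using this
  have hUU' : Uᴴ * U = 1 := mul_eq_one_comm.mp hUU
  have hUv : U *ᵥ (Pperp *ᵥ ψ') = U *ᵥ (-(Gplus *ᵥ w)) := by
    rw [hUmv, hUmv]; funext k; exact hcoord k
  calc Pperp *ᵥ ψ' = (Uᴴ * U) *ᵥ (Pperp *ᵥ ψ') := by rw [hUU', Matrix.one_mulVec]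
    _ = Uᴴ *ᵥ (U *ᵥ (Pperp *ᵥ ψ')) := (Matrix.mulVec_mulVec _ _ _).symm
    _ = Uᴴ *ᵥ (U *ᵥ (-(Gplus *ᵥ w))) := by rw [hUv]
    _ = (Uᴴ * U) *ᵥ (-(Gplus *ᵥ w)) := Matrix.mulVec_mulVec _ _ _
    _ = -(Gplus *ᵥ w) := by rw [hUU', Matrix.one_mulVec]
end
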